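/- arXiv:2308.16720 — 3 statements merged into one kernel-verified Lean document; each statement's English description precedes it below -/
import Mathlib

section
/- Let H be a real Hilbert space, r ∈ ℕ, and let u, v : Fin r → H be orthonormal families such that the r×r Gram matrix S with entries S i j = ⟨u i, v j⟩ is symmetric and positive semidefinite. Then for every w ∈ EuclideanSpace ℝ (Fin r), ‖∑ i, (w i) • (u i − v i)‖ ≤ √2 · ‖P_U − P_V‖ · ‖w‖, where ‖P_U − P_V‖ is the operator norm of the difference of the two orthogonal projections; equivalently, the operator norm of the linear map w ↦ ∑ i, (w i) • (u i − v i) from EuclideanSpace ℝ (Fin r) to H is at most √2 · ‖P_U − P_V‖. -/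
open scoped InnerProductSpace

/-- The orthogonal projection of a real Hilbert space onto the (finite-dimensional, hence
complete) span of a finite family, viewed as a continuous linear map `H →L[ℝ] H`. -/
noncomputable def spanProj {H : Type*} [NormedAddCommGroup H] [InnerProductSpace ℝ H]
    [CompleteSpace H] {r : ℕ} (u : Fin r → H) : H →L[ℝ] H :=
  haveI : FiniteDimensional ℝ (Submodule.span ℝ (Set.range u)) :=
    FiniteDimensional.span_of_finite ℝ (Set.finite_range u)
  (Submodule.span ℝ (Set.range u)).subtypeL.comp
    (Submodule.orthogonalProjection (Submodule.span ℝ (Set.range u)))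

/-- If `u, v` are orthonormal families in a real Hilbert space whose Gram matrix
`S i j = ⟪u i, v j⟫` is symmetric positive semidefinite, then for any coefficient vector `w`,
`‖∑ i, w i • (u i - v i)‖ ≤ √2 ‖P_U - P_V‖ ‖w‖`. -/
theorem stmt0 {H : Type*} [NormedAddCommGroup H] [InnerProductSpace ℝ H] [CompleteSpace H]
    {r : ℕ} (u v : Fin r → H) (hu : Orthonormal ℝ u) (hv : Orthonormal ℝ v)
    (hS_symm : (Matrix.of fun i j : Fin r => ⟪u i, v j⟫_ℝ).IsSymm)
    (hS_psd : (Matrix.of fun i j : Fin r => ⟪u i, v j⟫_ℝ).PosSemidef)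
    (w : EuclideanSpace ℝ (Fin r)) :
    ‖∑ i, w i • (u i - v i)‖ ≤ Real.sqrt 2 * ‖spanProj u - spanProj v‖ * ‖w‖ := by
  classical
  set S : Matrix (Fin r) (Fin r) ℝ := Matrix.of fun i j : Fin r => ⟪u i, v j⟫_ℝ with hSdef
  -- basic inner product computations
  have hSapp : ∀ i j, S i j = ⟪u i, v j⟫_ℝ := fun i j => rfl
  have hcross : ∀ x y : Fin r → ℝ,
      ⟪∑ i, x i • u i, ∑ j, y j • v j⟫_ℝ = dotProduct x (S.mulVec y) := by
    intro x y
    simp_rw [sum_inner, inner_smul_left, inner_sum, inner_smul_right]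
    simp only [dotProduct, Matrix.mulVec, Finset.mul_sum, ← hSapp,
      RCLike.star_def, starRingEnd_apply, star_trivial]
    exact Finset.sum_congr rfl fun i _ => Finset.sum_congr rfl fun j _ => by ring
  have hnormu : ∀ x : Fin r → ℝ, ⟪∑ i, x i • u i, ∑ i, x i • u i⟫_ℝ = ∑ i, x i ^ 2 := by
    intro x
    simpa [sq] using hu.inner_sum x x Finset.univ
  have hnormv : ∀ x : Fin r → ℝ, ⟪∑ i, x i • v i, ∑ i, x i • v i⟫_ℝ = ∑ i, x i ^ 2 := by
    intro x
    simpa [sq] using hv.inner_sum x x Finset.univ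
  -- norm of the main vector
  have hxuv : ∑ i, w i • (u i - v i) = (∑ i, w i • u i) - ∑ i, w i • v i := by
    simp [smul_sub, Finset.sum_sub_distrib]
  have hwS : dotProduct w (S.mulVec w) = ⟪∑ i, w i • u i, ∑ j, w j • v j⟫_ℝ :=
    (hcross w w).symm
  have hnx : ‖∑ i, w i • (u i - v i)‖ ^ 2
      = 2 * (∑ i, w i ^ 2) - 2 * dotProduct w (S.mulVec w) := by
    rw [hxuv, norm_sub_sq_real, ← real_inner_self_eq_norm_sq, ← real_inner_self_eq_norm_sq,
      hnormu, hnormv, hwS]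
    ring
  -- the projections
  set K : Submodule ℝ H := Submodule.span ℝ (Set.range u) with hK
  haveI : FiniteDimensional ℝ K := FiniteDimensional.span_of_finite ℝ (Set.finite_range u)
  haveI : FiniteDimensional ℝ (Submodule.span ℝ (Set.range v)) :=
    FiniteDimensional.span_of_finite ℝ (Set.finite_range v)
  set y : H := ∑ i, w i • v i with hy
  set c : Fin r → ℝ := S.mulVec w with hc
  set p : H := ∑ j, c j • u j with hp
  have hpK : p ∈ K := Submodule.sum_mem _ fun j _ => Submodule.smul_mem _ _
    (Submodule.subset_span (Set.mem_range_self j))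
  have hinner_uy : ∀ j, ⟪u j, y⟫_ℝ = c j := by
    intro j
    rw [hy, inner_sum]
    simp_rw [inner_smul_right]
    simp [hc, Matrix.mulVec, dotProduct, ← hSapp, mul_comm]
  have hinner_up : ∀ j, ⟪u j, p⟫_ℝ = c j := fun j => hu.inner_right_fintype c j
  have horth : ∀ z ∈ K, ⟪y - p, z⟫_ℝ = 0 := by
    intro z hz
    induction hz using Submodule.span_induction with
    | mem z hz =>
        obtain ⟨j, rfl⟩ := hz
        rw [real_inner_comm, inner_sub_right, hinner_uy, hinner_up, sub_self]
    | zero => simp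
    | add a b ha hb iha ihb => rw [inner_add_right, iha, ihb, add_zero]
    | smul a x hx ihx => rw [inner_smul_right, ihx, mul_zero]
  have hproj_u_y : spanProj u y = p := by
    simp only [spanProj, ContinuousLinearMap.comp_apply, Submodule.subtypeL_apply]
    exact Submodule.eq_starProjection_of_mem_of_inner_eq_zero hpK horth
  have hproj_v_y : spanProj v y = y := by
    have hyV : y ∈ Submodule.span ℝ (Set.range v) := Submodule.sum_mem _ fun i _ =>
      Submodule.smul_mem _ _ (Submodule.subset_span (Set.mem_range_self i))
    simp only [spanProj, ContinuousLinearMap.comp_apply, Submodule.subtypeL_apply]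
    exact Submodule.starProjection_eq_self_iff.mpr hyV
  -- Pythagoras
  have hnp : ‖p‖ ^ 2 = ∑ j, c j ^ 2 := by
    rw [← real_inner_self_eq_norm_sq]; exact hnormu c
  have hny : ‖y‖ ^ 2 = ∑ i, w i ^ 2 := by
    rw [← real_inner_self_eq_norm_sq]; exact hnormv w
  have hpyth : ‖p - y‖ ^ 2 = ‖y‖ ^ 2 - ‖p‖ ^ 2 := by
    have h0 : ⟪p, y - p⟫_ℝ = 0 := by rw [real_inner_comm]; exact horth p hpK
    have h1 := norm_add_sq_real p (y - p)
    rw [add_sub_cancel, h0] at h1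
    rw [norm_sub_rev]
    linarith
  -- 1 - S is positive semidefinite (Cauchy-Schwarz)
  have hquad : ∀ x : Fin r → ℝ, dotProduct x (S.mulVec x) ≤ ∑ i, x i ^ 2 := by
    intro x
    have ha : ‖∑ i, x i • u i‖ = Real.sqrt (∑ i, x i ^ 2) := by
      rw [← Real.sqrt_sq (norm_nonneg (∑ i, x i • u i)), ← real_inner_self_eq_norm_sq, hnormu]
    have hb : ‖∑ i, x i • v i‖ = Real.sqrt (∑ i, x i ^ 2) := by
      rw [← Real.sqrt_sq (norm_nonneg (∑ i, x i • v i)), ← real_inner_self_eq_norm_sq, hnormv]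
    have hx2 : (0:ℝ) ≤ ∑ i, x i ^ 2 := Finset.sum_nonneg fun i _ => sq_nonneg _
    calc dotProduct x (S.mulVec x) = ⟪∑ i, x i • u i, ∑ j, x j • v j⟫_ℝ :=
          (hcross x x).symm
      _ ≤ ‖∑ i, x i • u i‖ * ‖∑ j, x j • v j‖ := real_inner_le_norm _ _
      _ = ∑ i, x i ^ 2 := by rw [ha, hb, Real.mul_self_sqrt hx2]
  have hIS : (1 - S).PosSemidef := by
    refine Matrix.PosSemidef.of_dotProduct_mulVec_nonneg ?_ ?_
    · unfold Matrix.IsHermitian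
      rw [Matrix.conjTranspose_sub, hS_psd.1.eq, Matrix.conjTranspose_one]
    · intro x
      have h1 : dotProduct (star x) ((1 - S).mulVec x)
          = (∑ i, x i ^ 2) - dotProduct x (S.mulVec x) := by
        simp [Matrix.sub_mulVec, dotProduct_sub, Matrix.one_mulVec,
          dotProduct, sq, Finset.sum_sub_distrib, mul_sub]
      rw [h1, sub_nonneg]
      exact hquad x
  -- key: ‖Sw‖² ≤ ⟪Sw, w⟫ via the psd square root
  have hkey : dotProduct c c ≤ dotProduct w (S.mulVec w) := by
    obtain ⟨T, hTsym, hTT⟩ : ∃ T : Matrix (Fin r) (Fin r) ℝ, T.conjTranspose = T ∧ T * T = S :=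
      open scoped MatrixOrder in
      ⟨CFC.sqrt S, (CFC.sqrt_nonneg S).isSelfAdjoint.star_eq, CFC.sqrt_mul_sqrt_self S hS_psd.nonneg⟩
    have hM : T * (1 - S) * T = S - S * S := by
      rw [← hTT]; noncomm_ring
    have hpsd2 : (S - S * S).PosSemidef := by
      have h2 := hIS.conjTranspose_mul_mul_same T
      rwa [hTsym, hM] at h2
    have h3 := hpsd2.dotProduct_mulVec_nonneg w
    have h4 : dotProduct (star w) ((S - S * S).mulVec w)
        = dotProduct w (S.mulVec w) - dotProduct c c := by
      have h5 : (S * S).mulVec w = S.mulVec c := by rw [hc, Matrix.mulVec_mulVec]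
      have h6 : dotProduct w (S.mulVec c) = dotProduct c c := by
        rw [Matrix.dotProduct_mulVec, ← hS_symm.eq, Matrix.vecMul_transpose, ← hc]
      rw [Matrix.sub_mulVec, dotProduct_sub, h5, star_trivial, h6]
    rw [h4, sub_nonneg] at h3
    exact h3
  -- assemble
  set N : ℝ := ‖spanProj u - spanProj v‖ with hN
  have hNnn : (0:ℝ) ≤ N := norm_nonneg _
  have hdiff : (spanProj u - spanProj v) y = p - y := by
    rw [ContinuousLinearMap.sub_apply, hproj_u_y, hproj_v_y]
  have hop : ‖p - y‖ ≤ N * ‖y‖ := by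
    rw [← hdiff]; exact (spanProj u - spanProj v).le_opNorm y
  have hwnorm : ‖w‖ ^ 2 = ∑ i, w i ^ 2 := by
    rw [EuclideanSpace.norm_eq, Real.sq_sqrt (Finset.sum_nonneg fun i _ => sq_nonneg _)]
    simp [sq_abs]
  have hcc : dotProduct c c = ∑ j, c j ^ 2 := by
    simp [dotProduct, sq]
  have e1 : ∑ j, c j ^ 2 ≤ dotProduct w c := by rw [← hcc]; exact hkey
  have h1 : ‖p - y‖ ^ 2 ≤ (N * ‖y‖) ^ 2 :=
    pow_le_pow_left₀ (norm_nonneg _) hop 2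
  have hyw : (N * ‖y‖) ^ 2 = (N * ‖w‖) ^ 2 := by
    rw [mul_pow, mul_pow, hny, ← hwnorm]
  have hfin : (Real.sqrt 2 * N * ‖w‖) ^ 2 = 2 * (N * ‖w‖) ^ 2 := by
    rw [mul_pow, mul_pow, Real.sq_sqrt (by norm_num : (0:ℝ) ≤ 2)]
    ring
  have hsq : ‖∑ i, w i • (u i - v i)‖ ^ 2 ≤ (Real.sqrt 2 * N * ‖w‖) ^ 2 := by
    linarith [hnx, e1, hny, hnp, hpyth, h1, hyw, hfin]
  have hrhs : (0:ℝ) ≤ Real.sqrt 2 * N * ‖w‖ :=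
    mul_nonneg (mul_nonneg (Real.sqrt_nonneg _) hNnn) (norm_nonneg _)
  calc ‖∑ i, w i • (u i - v i)‖
      = Real.sqrt (‖∑ i, w i • (u i - v i)‖ ^ 2) := (Real.sqrt_sq (norm_nonneg _)).symm
    _ ≤ Real.sqrt ((Real.sqrt 2 * N * ‖w‖) ^ 2) := Real.sqrt_le_sqrt hsq
    _ = Real.sqrt 2 * N * ‖w‖ := Real.sqrt_sq hrhs
end

section
/- Let H be a real Hilbert space, r ∈ ℕ, and let u, v : Fin r → H be orthonormal families such that the r×r Gram matrix S with entries S i j = ⟨u i, v j⟩ is symmetric and positive semidefinite. Then for all x, y ∈ EuclideanSpace ℝ (Fin r), ‖x − y‖ ≤ √2 · ‖∑ i, (x i) • u i − ∑ i, (y i) • v i‖, where the norm on the left is the Euclidean norm and on the right the Hilbert norm of H. -/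
open scoped InnerProductSpace

/-- If `u, v` are orthonormal families in a real Hilbert space whose Gram matrix
`S i j = ⟪u i, v j⟫` is symmetric positive semidefinite, then for all coefficient vectors
`x, y`, `‖x - y‖ ≤ √2 ‖∑ i, x i • u i - ∑ i, y i • v i‖`. -/
theorem stmt1 {H : Type*} [NormedAddCommGroup H] [InnerProductSpace ℝ H] [CompleteSpace H]
    {r : ℕ} (u v : Fin r → H) (hu : Orthonormal ℝ u) (hv : Orthonormal ℝ v)
    (hS_symm : (Matrix.of fun i j : Fin r => ⟪u i, v j⟫_ℝ).IsSymm)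
    (hS_psd : (Matrix.of fun i j : Fin r => ⟪u i, v j⟫_ℝ).PosSemidef)
    (x y : EuclideanSpace ℝ (Fin r)) :
    ‖x - y‖ ≤ Real.sqrt 2 * ‖∑ i, x i • u i - ∑ i, y i • v i‖ := by
  set a : EuclideanSpace ℝ (Fin r) → H := fun z => ∑ i, z i • u i with ha
  set b : EuclideanSpace ℝ (Fin r) → H := fun z => ∑ i, z i • v i with hb
  -- norms of the combinations
  have hna : ∀ z : EuclideanSpace ℝ (Fin r), ‖a z‖ ^ 2 = ‖z‖ ^ 2 := by
    intro z
    rw [← real_inner_self_eq_norm_sq, ← real_inner_self_eq_norm_sq]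
    have := hu.inner_sum z z Finset.univ
    simp only [RCLike.star_def, starRingEnd_apply, star_trivial] at this
    rw [ha]
    simp only [this]
    simp [PiLp.inner_apply, RCLike.inner_apply]
    rw [EuclideanSpace.norm_sq_eq]; simp [sq]
  have hnb : ∀ z : EuclideanSpace ℝ (Fin r), ‖b z‖ ^ 2 = ‖z‖ ^ 2 := by
    intro z
    rw [← real_inner_self_eq_norm_sq, ← real_inner_self_eq_norm_sq]
    have := hv.inner_sum z z Finset.univ
    simp only [RCLike.star_def, starRingEnd_apply, star_trivial] at this
    rw [hb]
    simp only [this]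
    simp [PiLp.inner_apply, RCLike.inner_apply]
    rw [EuclideanSpace.norm_sq_eq]; simp [sq]
  -- inner product as a double sum
  have hB : ∀ z w : EuclideanSpace ℝ (Fin r),
      ⟪a z, b w⟫_ℝ = ∑ i, ∑ j, z i * w j * ⟪u i, v j⟫_ℝ := by
    intro z w
    rw [ha, hb]
    simp only [sum_inner, inner_sum, real_inner_smul_left, real_inner_smul_right]
    rw [Finset.sum_comm]
    exact Finset.sum_congr rfl fun i _ => Finset.sum_congr rfl fun j _ => by ring
  -- symmetry
  have hsymm : ∀ z w : EuclideanSpace ℝ (Fin r), ⟪a z, b w⟫_ℝ = ⟪a w, b z⟫_ℝ := by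
    intro z w
    rw [hB, hB]
    rw [Finset.sum_comm]
    refine Finset.sum_congr rfl fun j _ => Finset.sum_congr rfl fun i _ => ?_
    have := hS_symm.apply i j
    simp only [Matrix.of_apply] at this
    rw [this]; ring
  -- positivity
  have hpos : ∀ z : EuclideanSpace ℝ (Fin r), 0 ≤ ⟪a z, b z⟫_ℝ := by
    intro z
    have := hS_psd.dotProduct_mulVec_nonneg (fun i => z i)
    simp only [dotProduct, Matrix.mulVec, dotProduct, Pi.star_apply,
      star_trivial, Matrix.of_apply] at this
    rw [hB]
    refine this.trans_eq (Eq.symm ?_)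
    refine Finset.sum_congr rfl fun i _ => ?_
    rw [Finset.mul_sum]
    refine Finset.sum_congr rfl fun j _ => by ring
  -- additivity
  have haadd : ∀ z w : EuclideanSpace ℝ (Fin r), a (z + w) = a z + a w := by
    intro z w
    simp [ha, add_smul, Finset.sum_add_distrib]
  have hbadd : ∀ z w : EuclideanSpace ℝ (Fin r), b (z + w) = b z + b w := by
    intro z w
    simp [hb, add_smul, Finset.sum_add_distrib]
  have hasub : ∀ z w : EuclideanSpace ℝ (Fin r), a (z - w) = a z - a w := by
    intro z w
    simp [ha, sub_smul, Finset.sum_sub_distrib]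
  have hbsub : ∀ z w : EuclideanSpace ℝ (Fin r), b (z - w) = b z - b w := by
    intro z w
    simp [hb, sub_smul, Finset.sum_sub_distrib]
  -- key inequality: 4 ⟪a x, b y⟫ ≤ ‖x + y‖²
  have hCS : ⟪a (x + y), b (x + y)⟫_ℝ ≤ ‖x + y‖ ^ 2 := by
    calc ⟪a (x + y), b (x + y)⟫_ℝ ≤ ‖a (x + y)‖ * ‖b (x + y)‖ := real_inner_le_norm _ _
    _ ≤ ‖x + y‖ ^ 2 := by
        have h1 : ‖a (x + y)‖ = ‖x + y‖ := by
          have := hna (x + y)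
          nlinarith [norm_nonneg (a (x + y)), norm_nonneg (x + y)]
        have h2 : ‖b (x + y)‖ = ‖x + y‖ := by
          have := hnb (x + y)
          nlinarith [norm_nonneg (b (x + y)), norm_nonneg (x + y)]
        rw [h1, h2]; ring_nf; exact le_refl _
  have hexp1 : ⟪a (x + y), b (x + y)⟫_ℝ
      = ⟪a x, b x⟫_ℝ + ⟪a y, b y⟫_ℝ + 2 * ⟪a x, b y⟫_ℝ := by
    rw [haadd, hbadd]
    simp only [inner_add_left, inner_add_right]
    have := hsymm y x
    linarith [this]
  have hexp2 : ⟪a (x - y), b (x - y)⟫_ℝ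
      = ⟪a x, b x⟫_ℝ + ⟪a y, b y⟫_ℝ - 2 * ⟪a x, b y⟫_ℝ := by
    rw [hasub, hbsub]
    simp only [inner_sub_left, inner_sub_right]
    have := hsymm y x
    linarith [this]
  have hkey : 4 * ⟪a x, b y⟫_ℝ ≤ ‖x + y‖ ^ 2 := by
    have h0 := hpos (x - y)
    linarith [hCS, hexp1, hexp2.symm]
  -- squared inequality
  have hsq : ‖x - y‖ ^ 2 ≤ 2 * ‖a x - b y‖ ^ 2 := by
    have e1 : ‖a x - b y‖ ^ 2 = ‖x‖ ^ 2 + ‖y‖ ^ 2 - 2 * ⟪a x, b y⟫_ℝ := by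
      rw [norm_sub_sq_real, hna x, hnb y]; ring
    have e2 : ‖x - y‖ ^ 2 = ‖x‖ ^ 2 + ‖y‖ ^ 2 - 2 * ⟪x, y⟫_ℝ := by
      rw [norm_sub_sq_real]; ring
    have e3 : ‖x + y‖ ^ 2 = ‖x‖ ^ 2 + ‖y‖ ^ 2 + 2 * ⟪x, y⟫_ℝ := by
      rw [norm_add_sq_real]; ring
    linarith [hkey]
  -- conclude
  have h2 : Real.sqrt 2 * ‖∑ i, x i • u i - ∑ i, y i • v i‖
      = Real.sqrt (2 * ‖a x - b y‖ ^ 2) := by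
    rw [Real.sqrt_mul (by norm_num), Real.sqrt_sq (norm_nonneg _)]
  rw [h2]
  calc ‖x - y‖ = Real.sqrt (‖x - y‖ ^ 2) := (Real.sqrt_sq (norm_nonneg _)).symm
  _ ≤ Real.sqrt (2 * ‖a x - b y‖ ^ 2) := Real.sqrt_le_sqrt hsq
end

section
/- Fix d ≥ 1 and ranks r : Fin d → ℕ. For each μ : Fin d, let u^μ, ũ^μ : Fin (r μ) → ℓ²(ℕ; ℝ) be orthonormal families such that the r μ × r μ matrix with entries ⟨u^μ_a, ũ^μ_b⟩ is symmetric and positive semidefinite. Then for all core tensors C, C̃ ∈ EuclideanSpace ℝ (Π μ : Fin d, Fin (r μ)), ‖C − C̃‖ ≤ √2 · ‖Ψ(C, u) − Ψ(C̃, ũ)‖, where the left-hand norm is the Frobenius norm on core tensors and the right-hand norm is the ℓ²-norm on H = ℓ²(ℕ^d; ℝ). -/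
set_option maxHeartbeats 1000000


open scoped InnerProductSpace ENNReal

theorem Tucker.aux_hasSum_pi_prod : ∀ {m : ℕ} (a : Fin m → ℕ → ℝ),
    (∀ i, Summable fun n => |a i n|) →
    HasSum (fun x : Fin m → ℕ => ∏ i, a i (x i)) (∏ i, ∑' n, a i n) := by
  intro m
  induction m with
  | zero =>
    intro a _
    simp only [Finset.univ_eq_empty, Finset.prod_empty]
    have h := hasSum_single (f := fun _ : Fin 0 → ℕ => (1 : ℝ)) (default : Fin 0 → ℕ)
      (fun b hb => absurd (Subsingleton.elim _ _) hb)
    simpa using h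
  | succ m ih =>
    intro a ha
    have h0 : HasSum (a 0) (∑' n, a 0 n) := (Summable.of_abs (ha 0)).hasSum
    have htail : HasSum (fun x : Fin m → ℕ => ∏ i : Fin m, a i.succ (x i))
        (∏ i : Fin m, ∑' n, a i.succ n) :=
      ih (fun i : Fin m => a i.succ) (fun i => ha i.succ)
    have habs : Summable (fun x : Fin m → ℕ => ∏ i : Fin m, |a i.succ (x i)|) :=
      (ih (fun (i : Fin m) n => |a i.succ n|) (fun i => by simpa using ha i.succ)).summable
    have hprod : Summable (fun p : ℕ × (Fin m → ℕ) =>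
        a 0 p.1 * ∏ i : Fin m, a i.succ (p.2 i)) := by
      have h := Summable.mul_of_nonneg (ha 0) habs (fun _ => abs_nonneg _)
        (fun x => Finset.prod_nonneg fun _ _ => abs_nonneg _)
      refine Summable.of_abs (h.congr fun p => ?_)
      simp [abs_mul, Finset.abs_prod]
    have hmul := HasSum.mul h0 htail hprod
    have hcomp : ((fun x : Fin (m+1) → ℕ => ∏ i, a i (x i)) ∘ (Fin.consEquiv fun _ => ℕ)) =
        fun p : ℕ × (Fin m → ℕ) => a 0 p.1 * ∏ i : Fin m, a i.succ (p.2 i) := by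
      funext p
      simp [Fin.consEquiv, Fin.prod_univ_succ]
    rw [Fin.prod_univ_succ, ← (Fin.consEquiv fun _ : Fin (m+1) => ℕ).hasSum_iff, hcomp]
    exact hmul


namespace Tucker

variable (d : ℕ) (r : Fin d → ℕ)

/-- Core tensor space with the Frobenius (Euclidean) norm. -/
abbrev Ec := EuclideanSpace ℝ (∀ μ : Fin d, Fin (r μ))

/-- `ℓ²(ℕ; ℝ)`. -/
noncomputable abbrev l2N := lp (fun _ : ℕ => ℝ) 2

/-- The ambient space `H = ℓ²(ℕ^d; ℝ)`. -/
noncomputable abbrev Hsp := lp (fun _ : Fin d → ℕ => ℝ) 2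

/-- The `μ`-th matricization of a core tensor. -/
def matricize (μ : Fin d) (C : Ec d r) :
    Matrix (Fin (r μ)) (∀ ν : {ν : Fin d // ν ≠ μ}, Fin (r ν.1)) ℝ :=
  Matrix.of fun a b =>
    C fun ν => if h : ν = μ then Fin.cast (congrArg r h).symm a else b ⟨ν, h⟩

/-- Full multilinear rank. -/
def fullRank (C : Ec d r) : Prop := ∀ μ : Fin d, (matricize d r μ C).rank = r μ

/-- Multilinear multiplication `C ×₁ T¹ ⋯ ×_d T^d`. -/
def mulMul (T : ∀ μ : Fin d, Matrix (Fin (r μ)) (Fin (r μ)) ℝ) (C : Ec d r) : Ec d r :=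
  WithLp.toLp 2 (fun k => ∑ j : ∀ μ : Fin d, Fin (r μ), (∏ μ, T μ (k μ) (j μ)) * C j)

/-- Gram matrix of a finite family in `ℓ²(ℕ; ℝ)`. -/
noncomputable def gram {n : ℕ} (f : Fin n → l2N) : Matrix (Fin n) (Fin n) ℝ :=
  Matrix.of fun a b => ⟪f a, f b⟫_ℝ

open Classical in
/-- The tensor `Ψ(C, u)` with entries `i ↦ ∑_k C k ∏ μ, u^μ_{k μ} (i μ)`. -/
noncomputable def Psi (C : Ec d r) (u : ∀ μ : Fin d, Fin (r μ) → l2N) : Hsp d :=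
  if h : Memℓp (fun i : Fin d → ℕ =>
      ∑ k : ∀ μ : Fin d, Fin (r μ), C k * ∏ μ, (u μ (k μ) : ℕ → ℝ) (i μ)) 2
  then ⟨_, h⟩ else 0

/-- The low-rank manifold `M`. -/
def Mset (Mc : Set (Ec d r)) : Set (Hsp d) :=
  {X | ∃ C ∈ Mc, ∃ u : ∀ μ : Fin d, Fin (r μ) → l2N,
    (∀ μ, IsUnit (gram (u μ))) ∧ X = Psi d r C u}

/-- The identity map into the weak topology. -/
def toWeak : Hsp d → WeakSpace ℝ (Hsp d) := fun x => x

/-- The weak closure of a subset of `H`. -/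
def weakClosure (S : Set (Hsp d)) : Set (Hsp d) :=
  toWeak d ⁻¹' closure (toWeak d '' S)




lemma absMem (f : l2N) : Memℓp (fun n => |(f : ℕ → ℝ) n|) 2 := by
  have h := lp.memℓp f
  rw [memℓp_gen_iff (by norm_num)] at h ⊢
  simpa using h

lemma summable_abs_mul (f g : l2N) : Summable fun n => |(f : ℕ → ℝ) n * (g : ℕ → ℝ) n| := by
  have h := lp.summable_inner (𝕜 := ℝ) (⟨_, absMem f⟩ : l2N) (⟨_, absMem g⟩ : l2N)
  simp only [RCLike.inner_apply, starRingEnd_apply, star_trivial] at h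
  refine h.congr fun n => ?_
  simp [abs_mul, mul_comm]

lemma inner_l2 (f g : l2N) : ⟪f, g⟫_ℝ = ∑' n, (f : ℕ → ℝ) n * (g : ℕ → ℝ) n := by
  rw [lp.inner_eq_tsum]
  simp [RCLike.inner_apply]
  exact tsum_congr fun n => mul_comm _ _

lemma hasSum_PP (f g : Fin d → l2N) :
    HasSum (fun i : Fin d → ℕ =>
        (∏ μ, (f μ : ℕ → ℝ) (i μ)) * ∏ μ, (g μ : ℕ → ℝ) (i μ))
      (∏ μ, ⟪f μ, g μ⟫_ℝ) := by
  have h := Tucker.aux_hasSum_pi_prod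
    (fun μ n => (f μ : ℕ → ℝ) n * (g μ : ℕ → ℝ) n)
    (fun μ => summable_abs_mul (f μ) (g μ))
  simp only [inner_l2]
  refine (h.congr_fun fun i => ?_)
  rw [Finset.prod_mul_distrib]

lemma memPP (f : Fin d → l2N) :
    Memℓp (fun i : Fin d → ℕ => ∏ μ, (f μ : ℕ → ℝ) (i μ)) 2 := by
  apply memℓp_gen
  have h := (hasSum_PP d f f).summable
  refine h.congr fun i => ?_
  have h2 : ((2 : ℝ≥0∞)).toReal = (2 : ℝ) := by norm_num
  rw [h2, show (2:ℝ) = ((2:ℕ):ℝ) by norm_num, Real.rpow_natCast, pow_two,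
    Real.norm_eq_abs, abs_mul_abs_self]

noncomputable def eT (f : Fin d → l2N) : Hsp d :=
  ⟨fun i => ∏ μ, (f μ : ℕ → ℝ) (i μ), memPP d f⟩

lemma inner_eT (f g : Fin d → l2N) : ⟪eT d f, eT d g⟫_ℝ = ∏ μ, ⟪f μ, g μ⟫_ℝ := by
  rw [lp.inner_eq_tsum]
  simp only [RCLike.inner_apply, starRingEnd_apply, star_trivial]
  rw [← (hasSum_PP d f g).tsum_eq]
  exact tsum_congr fun i => mul_comm _ _

lemma Psi_eq (C : Ec d r) (u : ∀ μ : Fin d, Fin (r μ) → l2N) :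
    Psi d r C u = ∑ k : ∀ μ : Fin d, Fin (r μ), C k • eT d (fun μ => u μ (k μ)) := by
  have hfun : (fun i : Fin d → ℕ =>
      ∑ k : ∀ μ : Fin d, Fin (r μ), C k * ∏ μ, (u μ (k μ) : ℕ → ℝ) (i μ))
      = ((∑ k : ∀ μ : Fin d, Fin (r μ), C k • eT d (fun μ => u μ (k μ)) : Hsp d) :
          (Fin d → ℕ) → ℝ) := by
    funext i
    rw [lp.coeFn_sum]
    simp [eT, Finset.sum_apply]
  rw [Psi, dif_pos (hfun ▸ lp.memℓp (∑ k : ∀ μ : Fin d, Fin (r μ),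
    C k • eT d (fun μ => u μ (k μ))))]
  exact lp.ext hfun



noncomputable def Qf (u v : ∀ μ : Fin d, Fin (r μ) → l2N) (x y : Ec d r) : ℝ :=
  ∑ k : ∀ μ : Fin d, Fin (r μ), ∑ j : ∀ μ : Fin d, Fin (r μ),
    x k * y j * ∏ μ, ⟪u μ (k μ), v μ (j μ)⟫_ℝ

lemma inner_Psi (u v : ∀ μ : Fin d, Fin (r μ) → l2N) (C Ct : Ec d r) :
    ⟪Psi d r C u, Psi d r Ct v⟫_ℝ = Qf d r u v C Ct := by
  rw [Psi_eq, Psi_eq, sum_inner]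
  simp only [inner_sum, real_inner_smul_left, real_inner_smul_right, inner_eT]
  simp only [Qf]
  refine Finset.sum_congr rfl fun k _ => Finset.sum_congr rfl fun j _ => by ring

lemma inner_Psi_same (u : ∀ μ : Fin d, Fin (r μ) → l2N) (hu : ∀ μ, Orthonormal ℝ (u μ))
    (x y : Ec d r) : ⟪Psi d r x u, Psi d r y u⟫_ℝ = ⟪x, y⟫_ℝ := by
  classical
  rw [inner_Psi]
  have hON : ∀ μ (a b : Fin (r μ)), ⟪u μ a, u μ b⟫_ℝ = if a = b then (1:ℝ) else 0 :=
    fun μ => orthonormal_iff_ite.mp (hu μ)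
  have hkj : ∀ k j : ∀ μ : Fin d, Fin (r μ),
      (∏ μ, ⟪u μ (k μ), u μ (j μ)⟫_ℝ) = if k = j then (1:ℝ) else 0 := by
    intro k j
    by_cases h : k = j
    · subst h; simp [hON]; exact Finset.prod_eq_one fun μ _ => by rw [(hu μ).1 (k μ)]; norm_num
    · have hex : ∃ μ, k μ ≠ j μ := by
        by_contra hc; push_neg at hc; exact h (funext hc)
      obtain ⟨μ0, hμ0⟩ := hex
      rw [if_neg h]
      refine Finset.prod_eq_zero (Finset.mem_univ μ0) ?_
      rw [hON, if_neg hμ0]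
  simp only [Qf, hkj, mul_ite, mul_one, mul_zero]
  rw [PiLp.inner_apply]
  simp [RCLike.inner_apply, Finset.sum_ite_eq, mul_comm]

lemma Qf_self_nonneg (u v : ∀ μ : Fin d, Fin (r μ) → l2N)
    (hpsd : ∀ μ, (Matrix.of fun a b : Fin (r μ) => ⟪u μ a, v μ b⟫_ℝ).PosSemidef)
    (x : Ec d r) : 0 ≤ Qf d r u v x x := by
  classical
  have hsq : ∀ μ, ∃ B : Matrix (Fin (r μ)) (Fin (r μ)) ℝ,
      (Matrix.of fun a b : Fin (r μ) => ⟪u μ a, v μ b⟫_ℝ) = star B * B := fun μ => by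
    open scoped MatrixOrder in exact CStarAlgebra.nonneg_iff_eq_star_mul_self.mp (hpsd μ).nonneg
  choose A hA using hsq
  have hent : ∀ μ (a b : Fin (r μ)), ⟪u μ a, v μ b⟫_ℝ = ∑ c, A μ c a * A μ c b := by
    intro μ a b
    have h := congrArg (fun M => M a b) (hA μ)
    simpa [Matrix.mul_apply, Matrix.star_eq_conjTranspose, Matrix.conjTranspose_apply] using h
  have key2 : ∀ k j : ∀ μ : Fin d, Fin (r μ),
      x k * x j * ∏ μ, ⟪u μ (k μ), v μ (j μ)⟫_ℝ
      = ∑ c : ∀ μ : Fin d, Fin (r μ),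
          (x k * ∏ μ, A μ (c μ) (k μ)) * (x j * ∏ μ, A μ (c μ) (j μ)) := by
    intro k j
    simp only [hent]
    rw [Fintype.prod_sum (f := fun μ c => A μ c (k μ) * A μ c (j μ)), Finset.mul_sum]
    refine Finset.sum_congr rfl fun c _ => ?_
    rw [Finset.prod_mul_distrib]
    ring
  have hQ : Qf d r u v x x = ∑ c : ∀ μ : Fin d, Fin (r μ),
      (∑ k : ∀ μ : Fin d, Fin (r μ), x k * ∏ μ, A μ (c μ) (k μ)) ^ 2 := by
    unfold Qf
    simp only [key2]
    rw [show (∑ k : ∀ μ : Fin d, Fin (r μ), ∑ j : ∀ μ : Fin d, Fin (r μ),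
        ∑ c : ∀ μ : Fin d, Fin (r μ),
          (x k * ∏ μ, A μ (c μ) (k μ)) * (x j * ∏ μ, A μ (c μ) (j μ)))
      = ∑ c : ∀ μ : Fin d, Fin (r μ), ∑ k : ∀ μ : Fin d, Fin (r μ),
          ∑ j : ∀ μ : Fin d, Fin (r μ),
          (x k * ∏ μ, A μ (c μ) (k μ)) * (x j * ∏ μ, A μ (c μ) (j μ)) from ?_]
    · refine Finset.sum_congr rfl fun c _ => ?_
      rw [sq, Finset.sum_mul_sum]
    · exact (Finset.sum_congr rfl fun k _ => Finset.sum_comm).trans Finset.sum_comm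
  rw [hQ]
  exact Finset.sum_nonneg fun c _ => sq_nonneg _

lemma Qf_symm (u v : ∀ μ : Fin d, Fin (r μ) → l2N)
    (hsymm : ∀ μ, (Matrix.of fun a b : Fin (r μ) => ⟪u μ a, v μ b⟫_ℝ).IsSymm)
    (x y : Ec d r) : Qf d r u v x y = Qf d r u v y x := by
  unfold Qf
  rw [Finset.sum_comm]
  refine Finset.sum_congr rfl fun j _ => Finset.sum_congr rfl fun k _ => ?_
  have hM : ∀ μ, ⟪u μ (k μ), v μ (j μ)⟫_ℝ = ⟪u μ (j μ), v μ (k μ)⟫_ℝ := by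
    intro μ
    have h := (hsymm μ).apply (j μ) (k μ)
    simpa using h
  simp only [hM]
  ring

lemma Qf_add_left (u v : ∀ μ : Fin d, Fin (r μ) → l2N) (x y z : Ec d r) :
    Qf d r u v (x + y) z = Qf d r u v x z + Qf d r u v y z := by
  simp [Qf, PiLp.add_apply, add_mul, Finset.sum_add_distrib]

lemma Qf_add_right (u v : ∀ μ : Fin d, Fin (r μ) → l2N) (x y z : Ec d r) :
    Qf d r u v x (y + z) = Qf d r u v x y + Qf d r u v x z := by
  simp [Qf, PiLp.add_apply, mul_add, add_mul, Finset.sum_add_distrib]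

lemma Qf_sub_left (u v : ∀ μ : Fin d, Fin (r μ) → l2N) (x y z : Ec d r) :
    Qf d r u v (x - y) z = Qf d r u v x z - Qf d r u v y z := by
  simp [Qf, PiLp.sub_apply, sub_mul, Finset.sum_sub_distrib]

lemma Qf_sub_right (u v : ∀ μ : Fin d, Fin (r μ) → l2N) (x y z : Ec d r) :
    Qf d r u v x (y - z) = Qf d r u v x y - Qf d r u v x z := by
  simp [Qf, PiLp.sub_apply, mul_sub, sub_mul, Finset.sum_sub_distrib]

lemma norm_Psi (u : ∀ μ : Fin d, Fin (r μ) → l2N) (hu : ∀ μ, Orthonormal ℝ (u μ))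
    (x : Ec d r) : ‖Psi d r x u‖ = ‖x‖ := by
  have h := inner_Psi_same d r u hu x x
  rw [real_inner_self_eq_norm_sq, real_inner_self_eq_norm_sq] at h
  calc ‖Psi d r x u‖ = Real.sqrt (‖Psi d r x u‖ ^ 2) := (Real.sqrt_sq (norm_nonneg _)).symm
    _ = Real.sqrt (‖x‖ ^ 2) := by rw [h]
    _ = ‖x‖ := Real.sqrt_sq (norm_nonneg _)


/-- If all families `u^μ`, `ũ^μ` are orthonormal with symmetric positive semidefinite mutual
Gram matrices, then `‖C - C̃‖ ≤ √2 ‖Ψ(C, u) - Ψ(C̃, ũ)‖`. -/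
theorem stmt10 (hd : 0 < d)
    (u v : ∀ μ : Fin d, Fin (r μ) → l2N)
    (hu : ∀ μ, Orthonormal ℝ (u μ)) (hv : ∀ μ, Orthonormal ℝ (v μ))
    (hsymm : ∀ μ, (Matrix.of fun a b : Fin (r μ) => ⟪u μ a, v μ b⟫_ℝ).IsSymm)
    (hpsd : ∀ μ, (Matrix.of fun a b : Fin (r μ) => ⟪u μ a, v μ b⟫_ℝ).PosSemidef)
    (C Ct : Ec d r) :
    ‖C - Ct‖ ≤ Real.sqrt 2 * ‖Psi d r C u - Psi d r Ct v‖ := by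
  have hPP : ⟪Psi d r C u, Psi d r Ct v⟫_ℝ = Qf d r u v C Ct := inner_Psi d r u v C Ct
  have hX : ‖Psi d r C u - Psi d r Ct v‖ ^ 2
      = ‖C‖ ^ 2 - 2 * Qf d r u v C Ct + ‖Ct‖ ^ 2 := by
    rw [norm_sub_sq_real, norm_Psi d r u hu, norm_Psi d r v hv, hPP]
  have hplus : Qf d r u v (C + Ct) (C + Ct) ≤ ‖C + Ct‖ ^ 2 := by
    rw [← inner_Psi d r u v]
    calc ⟪Psi d r (C + Ct) u, Psi d r (C + Ct) v⟫_ℝ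
        ≤ ‖Psi d r (C + Ct) u‖ * ‖Psi d r (C + Ct) v‖ := real_inner_le_norm _ _
      _ = ‖C + Ct‖ ^ 2 := by rw [norm_Psi d r u hu, norm_Psi d r v hv, sq]
  have hminus : 0 ≤ Qf d r u v (C - Ct) (C - Ct) := Qf_self_nonneg d r u v hpsd _
  have hsym : Qf d r u v C Ct = Qf d r u v Ct C := Qf_symm d r u v hsymm C Ct
  have hexp : Qf d r u v (C + Ct) (C + Ct) - Qf d r u v (C - Ct) (C - Ct)
      = 4 * Qf d r u v C Ct := by
    rw [Qf_add_left, Qf_add_right, Qf_add_right, Qf_sub_left, Qf_sub_right, Qf_sub_right]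
    linarith [hsym]
  have hC : ‖C + Ct‖ ^ 2 = ‖C‖ ^ 2 + 2 * ⟪C, Ct⟫_ℝ + ‖Ct‖ ^ 2 := norm_add_sq_real C Ct
  have hCm : ‖C - Ct‖ ^ 2 = ‖C‖ ^ 2 - 2 * ⟪C, Ct⟫_ℝ + ‖Ct‖ ^ 2 := norm_sub_sq_real C Ct
  have hsq : ‖C - Ct‖ ^ 2 ≤ 2 * ‖Psi d r C u - Psi d r Ct v‖ ^ 2 := by linarith
  calc ‖C - Ct‖ = Real.sqrt (‖C - Ct‖ ^ 2) := (Real.sqrt_sq (norm_nonneg _)).symm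
    _ ≤ Real.sqrt (2 * ‖Psi d r C u - Psi d r Ct v‖ ^ 2) := Real.sqrt_le_sqrt hsq
    _ = Real.sqrt 2 * ‖Psi d r C u - Psi d r Ct v‖ := by
        rw [Real.sqrt_mul (by norm_num), Real.sqrt_sq (norm_nonneg _)]

end Tucker
end
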